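/- Let A be a unital C*-algebra. The dual module H_A' of the standard Hilbert module H_A = l₂(A) can be identified with the set of all sequences f = (f_i) in A such that the partial sums of Σ f_i* f_i are uniformly bounded in norm, with f acting by f(x) = Σ_{i=1}^∞ f_i* x_i, and ‖f‖² = sup_N ‖Σ_{i=1}^N f_i* f_i‖. -/

import Mathlib

open scoped InnerProductSpace

/-- Membership in the standard Hilbert module `H_A = l₂(A)`: the series `∑ xᵢ* xᵢ`
converges in norm. -/
def MemHA {A : Type} [CStarAlgebra A] (x : ℕ → A) : Prop :=
  Summable fun i => star (x i) * x i

/-- The Hilbert module norm on `H_A`: `‖x‖ = ‖∑ xᵢ* xᵢ‖^{1/2}`. -/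
noncomputable def HAnorm {A : Type} [CStarAlgebra A] (x : ℕ → A) : ℝ :=
  Real.sqrt ‖∑' i, star (x i) * x i‖

/-- A bounded `A`-linear functional on the standard Hilbert module `H_A`. -/
def IsBddAFunctional {A : Type} [CStarAlgebra A] (φ : (ℕ → A) → A) : Prop :=
  (∀ x y : ℕ → A, MemHA x → MemHA y → φ (x + y) = φ x + φ y) ∧
  (∀ (x : ℕ → A) (a : A), MemHA x → φ (fun i => x i * a) = φ x * a) ∧
  (∃ C : ℝ, ∀ x : ℕ → A, MemHA x → ‖φ x‖ ≤ C * HAnorm x)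

section Helpers

variable {A : Type} [CStarAlgebra A]

/-- Cauchy–Schwarz inequality for finite sums in a C*-algebra. -/
lemma cs_finset (s : Finset ℕ) (a b : ℕ → A) :
    ‖∑ i ∈ s, star (a i) * b i‖ ≤
      Real.sqrt ‖∑ i ∈ s, star (a i) * a i‖ * Real.sqrt ‖∑ i ∈ s, star (b i) * b i‖ := by
  letI := CStarAlgebra.spectralOrder A
  haveI := CStarAlgebra.spectralOrderedRing A
  let x : WithCStarModule A ((i : s) → A) := (WithCStarModule.equiv A _).symm (fun i => star (a i))
  let y : WithCStarModule A ((i : s) → A) := (WithCStarModule.equiv A _).symm (fun i => star (b i))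
  have h := CStarModule.norm_inner_le (A := A) (E := WithCStarModule A ((i : s) → A)) (x := y) (y := x)
  have hxy : ⟪y, x⟫_A = ∑ i ∈ s, star (a i) * b i := by
    rw [WithCStarModule.pi_inner]
    simp only [WithCStarModule.inner_def, x, y, WithCStarModule.equiv_symm_pi_apply, star_star]
    exact Finset.sum_attach s (fun i => star (a i) * b i)
  have hx : ‖x‖ = Real.sqrt ‖∑ i ∈ s, star (a i) * a i‖ := by
    rw [WithCStarModule.pi_norm]
    congr 1
    simp only [WithCStarModule.inner_def, x, WithCStarModule.equiv_symm_pi_apply, star_star]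
    congr 1
    exact Finset.sum_attach s (fun i => star (a i) * a i)
  have hy : ‖y‖ = Real.sqrt ‖∑ i ∈ s, star (b i) * b i‖ := by
    rw [WithCStarModule.pi_norm]
    congr 1
    simp only [WithCStarModule.inner_def, y, WithCStarModule.equiv_symm_pi_apply, star_star]
    congr 1
    exact Finset.sum_attach s (fun i => star (b i) * b i)
  rw [hxy, hx, hy] at h
  exact h.trans_eq (mul_comm _ _)

lemma sum_sq_norm_mono (a : ℕ → A) {s t : Finset ℕ} (hst : s ⊆ t) :
    ‖∑ i ∈ s, star (a i) * a i‖ ≤ ‖∑ i ∈ t, star (a i) * a i‖ := by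
  letI := CStarAlgebra.spectralOrder A
  haveI := CStarAlgebra.spectralOrderedRing A
  refine CStarAlgebra.norm_le_norm_of_nonneg_of_le ?_ ?_
  · exact Finset.sum_nonneg fun i _ => star_mul_self_nonneg (a i)
  · exact Finset.sum_le_sum_of_subset_of_nonneg hst fun i _ _ => star_mul_self_nonneg (a i)

lemma bound_finsets {f : ℕ → A} {C : ℝ}
    (hC : ∀ N, ‖∑ i ∈ Finset.range N, star (f i) * f i‖ ≤ C) (s : Finset ℕ) :
    ‖∑ i ∈ s, star (f i) * f i‖ ≤ C := by
  obtain ⟨n, hn⟩ := s.exists_nat_subset_range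
  exact (sum_sq_norm_mono f hn).trans (hC n)

lemma summable_inner {f x : ℕ → A} {C : ℝ}
    (hC : ∀ N, ‖∑ i ∈ Finset.range N, star (f i) * f i‖ ≤ C) (hx : MemHA x) :
    Summable fun i => star (f i) * x i := by
  have hC0 : 0 ≤ C := by simpa using hC 0
  rw [summable_iff_vanishing_norm]
  intro ε hε
  have hδ : (0:ℝ) < (ε / (Real.sqrt C + 1)) ^ 2 := by positivity
  obtain ⟨s, hs⟩ := summable_iff_vanishing_norm.mp hx _ hδ
  refine ⟨s, fun t ht => ?_⟩
  have h1 : ‖∑ i ∈ t, star (f i) * x i‖ ≤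
      Real.sqrt ‖∑ i ∈ t, star (f i) * f i‖ * Real.sqrt ‖∑ i ∈ t, star (x i) * x i‖ :=
    cs_finset t f x
  have h2 : Real.sqrt ‖∑ i ∈ t, star (f i) * f i‖ ≤ Real.sqrt C :=
    Real.sqrt_le_sqrt (bound_finsets hC t)
  have h3 : Real.sqrt ‖∑ i ∈ t, star (x i) * x i‖ ≤ ε / (Real.sqrt C + 1) := by
    rw [show ε / (Real.sqrt C + 1) = Real.sqrt ((ε / (Real.sqrt C + 1)) ^ 2) from
      (Real.sqrt_sq (by positivity)).symm]
    exact Real.sqrt_le_sqrt (hs t ht).le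
  calc ‖∑ i ∈ t, star (f i) * x i‖
      ≤ Real.sqrt C * (ε / (Real.sqrt C + 1)) :=
        h1.trans (mul_le_mul h2 h3 (Real.sqrt_nonneg _) (Real.sqrt_nonneg _))
    _ = ε * (Real.sqrt C / (Real.sqrt C + 1)) := by ring
    _ < ε := mul_lt_of_lt_one_right hε ((div_lt_one (by positivity)).2 (lt_add_one _))

lemma norm_sum_le_norm_tsum {x : ℕ → A} (hx : MemHA x) (t : Finset ℕ) :
    ‖∑ i ∈ t, star (x i) * x i‖ ≤ ‖∑' i, star (x i) * x i‖ := by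
  have ht : Filter.Tendsto (fun s : Finset ℕ => ‖∑ i ∈ s, star (x i) * x i‖)
      Filter.atTop (nhds ‖∑' i, star (x i) * x i‖) := Filter.Tendsto.norm hx.hasSum
  refine ge_of_tendsto ht ?_
  filter_upwards [Filter.eventually_ge_atTop t] with s hs
  exact sum_sq_norm_mono x hs

lemma norm_tsum_inner_le {f x : ℕ → A} {C : ℝ}
    (hC : ∀ N, ‖∑ i ∈ Finset.range N, star (f i) * f i‖ ≤ C) (hx : MemHA x)
    (hsum : Summable fun i => star (f i) * x i) :
    ‖∑' i, star (f i) * x i‖ ≤ Real.sqrt C * HAnorm x := by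
  have ht : Filter.Tendsto (fun s : Finset ℕ => ‖∑ i ∈ s, star (f i) * x i‖)
      Filter.atTop (nhds ‖∑' i, star (f i) * x i‖) := Filter.Tendsto.norm hsum.hasSum
  refine le_of_tendsto ht ?_
  refine Filter.Eventually.of_forall fun s => ?_
  refine (cs_finset s f x).trans ?_
  exact mul_le_mul (Real.sqrt_le_sqrt (bound_finsets hC s))
    (Real.sqrt_le_sqrt (norm_sum_le_norm_tsum hx s)) (Real.sqrt_nonneg _) (Real.sqrt_nonneg _)

lemma memHA_zero : MemHA (0 : ℕ → A) := by
  simpa [MemHA] using summable_zero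

lemma memHA_of_finite {x : ℕ → A} (s : Finset ℕ) (h : ∀ i ∉ s, x i = 0) : MemHA x :=
  summable_of_ne_finset_zero (s := s) fun i hi => by simp [h i hi]

/-- Truncation of a sequence. -/
def trunc (x : ℕ → A) (N : ℕ) : ℕ → A := fun i => if i < N then x i else 0

/-- Tail of a sequence. -/
def tailseq (x : ℕ → A) (N : ℕ) : ℕ → A := fun i => if i < N then 0 else x i

lemma memHA_trunc (x : ℕ → A) (N : ℕ) : MemHA (trunc x N) :=
  memHA_of_finite (Finset.range N) fun i hi => if_neg (by simpa using hi)

lemma memHA_single (i : ℕ) (a : A) : MemHA (Pi.single i a) :=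
  memHA_of_finite {i} fun j hj => by
    rw [Finset.mem_singleton] at hj
    simp [Pi.single_apply, hj]

lemma trunc_add_tailseq (x : ℕ → A) (N : ℕ) : trunc x N + tailseq x N = x := by
  funext i
  by_cases h : i < N <;> simp [trunc, tailseq, h]

lemma memHA_tailseq {x : ℕ → A} (hx : MemHA x) (N : ℕ) : MemHA (tailseq x N) := by
  have he : (fun i => star (tailseq x N i) * tailseq x N i) =
      fun i => star (x i) * x i - (if i < N then star (x i) * x i else 0) := by
    funext i
    by_cases h : i < N <;> simp [tailseq, h]
  rw [MemHA, he]
  exact hx.sub (summable_of_ne_finset_zero (s := Finset.range N)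
    fun i hi => if_neg (by simpa using hi))

lemma trunc_succ (x : ℕ → A) (N : ℕ) :
    trunc x (N + 1) = trunc x N + Pi.single N (x N) := by
  funext i
  simp only [trunc, Pi.add_apply, Pi.single_apply]
  rcases lt_trichotomy i N with h | h | h
  · rw [if_pos (Nat.lt_succ_of_lt h), if_pos h, if_neg h.ne, add_zero]
  · subst h
    rw [if_pos (Nat.lt_succ_self i), if_neg (lt_irrefl i), if_pos rfl, zero_add]
  · rw [if_neg (by omega), if_neg (by omega), if_neg (by omega), add_zero]

lemma phi_zero {φ : (ℕ → A) → A}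
    (hadd : ∀ x y : ℕ → A, MemHA x → MemHA y → φ (x + y) = φ x + φ y) : φ 0 = 0 := by
  have h := hadd 0 0 memHA_zero memHA_zero
  rw [add_zero] at h
  exact (left_eq_add.mp h)

lemma phi_single {φ : (ℕ → A) → A}
    (hsmul : ∀ (x : ℕ → A) (a : A), MemHA x → φ (fun i => x i * a) = φ x * a)
    (i : ℕ) (a : A) : φ (Pi.single i a) = φ (Pi.single i 1) * a := by
  have h := hsmul (Pi.single i (1 : A)) a (memHA_single i 1)
  rw [← h]
  congr 1
  funext j
  rcases eq_or_ne j i with hj | hj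
  · subst hj; simp
  · simp [Pi.single_eq_of_ne hj]

lemma phi_trunc {φ : (ℕ → A) → A}
    (hadd : ∀ x y : ℕ → A, MemHA x → MemHA y → φ (x + y) = φ x + φ y)
    (hsmul : ∀ (x : ℕ → A) (a : A), MemHA x → φ (fun i => x i * a) = φ x * a)
    (x : ℕ → A) : ∀ N, φ (trunc x N) = ∑ i ∈ Finset.range N, φ (Pi.single i 1) * x i := by
  intro N
  induction N with
  | zero =>
      have h0 : trunc x 0 = 0 := by funext i; simp [trunc]
      rw [h0, phi_zero hadd, Finset.range_zero, Finset.sum_empty]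
  | succ N ih =>
      rw [trunc_succ, hadd _ _ (memHA_trunc x N) (memHA_single N (x N)), ih,
        phi_single hsmul, Finset.sum_range_succ]

end Helpers

/-- For a unital C*-algebra `A`, the dual module `H_A'` is identified with
the set of sequences `f = (fᵢ)` in `A` with uniformly norm-bounded partial sums of
`∑ fᵢ* fᵢ`: every such sequence defines a bounded `A`-linear functional
`x ↦ ∑ fᵢ* xᵢ`, its norm satisfies `‖f‖² = sup_N ‖∑_{i<N} fᵢ* fᵢ‖`, and conversely every
bounded `A`-linear functional on `H_A` arises this way. -/
theorem stmt9 {A : Type} [CStarAlgebra A] :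
    (∀ f : ℕ → A, (∃ C : ℝ, ∀ N : ℕ, ‖∑ i ∈ Finset.range N, star (f i) * f i‖ ≤ C) →
      ∃ φ : (ℕ → A) → A, IsBddAFunctional φ ∧
        (∀ x : ℕ → A, MemHA x → HasSum (fun i => star (f i) * x i) (φ x)) ∧
        (sSup {c : ℝ | ∃ x : ℕ → A, MemHA x ∧ HAnorm x ≤ 1 ∧ c = ‖φ x‖}) ^ 2
          = sSup {c : ℝ | ∃ N : ℕ, c = ‖∑ i ∈ Finset.range N, star (f i) * f i‖}) ∧
    (∀ φ : (ℕ → A) → A, IsBddAFunctional φ →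
      ∃ f : ℕ → A, (∃ C : ℝ, ∀ N : ℕ, ‖∑ i ∈ Finset.range N, star (f i) * f i‖ ≤ C) ∧
        ∀ x : ℕ → A, MemHA x → HasSum (fun i => star (f i) * x i) (φ x)) := by
  constructor
  · -- forward direction
    rintro f ⟨C, hC⟩
    refine ⟨fun x => ∑' i, star (f i) * x i, ⟨?_, ?_, ?_⟩, ?_, ?_⟩
    · -- additivity
      intro x y hx hy
      have hfx := summable_inner hC hx
      have hfy := summable_inner hC hy
      show ∑' i, star (f i) * (x + y) i = (∑' i, star (f i) * x i) + ∑' i, star (f i) * y i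
      rw [show (fun i => star (f i) * (x + y) i) =
        fun i => star (f i) * x i + star (f i) * y i from funext fun i => by
          simp [mul_add]]
      exact Summable.tsum_add hfx hfy
    · -- A-linearity
      intro x a hx
      have hfx := summable_inner hC hx
      show ∑' i, star (f i) * (x i * a) = (∑' i, star (f i) * x i) * a
      rw [show (fun i => star (f i) * (x i * a)) =
        fun i => (star (f i) * x i) * a from funext fun i => (mul_assoc _ _ _).symm]
      exact hfx.tsum_mul_right a
    · -- boundedness
      exact ⟨Real.sqrt C, fun x hx => norm_tsum_inner_le hC hx (summable_inner hC hx)⟩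
    · -- HasSum
      intro x hx
      exact (summable_inner hC hx).hasSum
    · -- norm identity
      set φ : (ℕ → A) → A := fun x => ∑' i, star (f i) * x i with hφdef
      set Sset := {c : ℝ | ∃ x : ℕ → A, MemHA x ∧ HAnorm x ≤ 1 ∧ c = ‖φ x‖} with hSdef
      set Tset := {c : ℝ | ∃ N : ℕ, c = ‖∑ i ∈ Finset.range N, star (f i) * f i‖} with hTdef
      have hTne : Tset.Nonempty := ⟨_, 0, rfl⟩
      have hTbdd : BddAbove Tset := ⟨C, by rintro c ⟨N, rfl⟩; exact hC N⟩
      set M := sSup Tset with hMdef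
      have hNM : ∀ N, ‖∑ i ∈ Finset.range N, star (f i) * f i‖ ≤ M :=
        fun N => le_csSup hTbdd ⟨N, rfl⟩
      have hM0 : 0 ≤ M := le_trans (norm_nonneg _) (hNM 0)
      have hSle : ∀ c ∈ Sset, c ≤ Real.sqrt M := by
        rintro c ⟨x, hx, hx1, rfl⟩
        calc ‖φ x‖ ≤ Real.sqrt M * HAnorm x :=
              norm_tsum_inner_le hNM hx (summable_inner hNM hx)
          _ ≤ Real.sqrt M := by
              refine mul_le_of_le_one_right (Real.sqrt_nonneg _) hx1
      have hSbdd : BddAbove Sset := ⟨Real.sqrt M, hSle⟩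
      have hφ0 : ‖φ 0‖ ∈ Sset := by
        refine ⟨0, memHA_zero, ?_, rfl⟩
        simp [HAnorm]
      have hSne : Sset.Nonempty := ⟨_, hφ0⟩
      have hS0 : 0 ≤ sSup Sset := le_trans (norm_nonneg (φ 0)) (le_csSup hSbdd hφ0)
      refine le_antisymm ?_ ?_
      · have h := csSup_le hSne hSle
        calc (sSup Sset) ^ 2 ≤ (Real.sqrt M) ^ 2 := by
              exact pow_le_pow_left₀ hS0 h 2
          _ = M := Real.sq_sqrt hM0
      · refine csSup_le hTne ?_
        rintro c ⟨N, rfl⟩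
        set SN := ∑ i ∈ Finset.range N, star (f i) * f i with hSNdef
        by_cases h0 : ‖SN‖ = 0
        · rw [h0]; positivity
        · have hpos : 0 < ‖SN‖ := lt_of_le_of_ne (norm_nonneg _) (Ne.symm h0)
          set r := Real.sqrt ‖SN‖ with hrdef
          have hrpos : 0 < r := Real.sqrt_pos.mpr hpos
          have hr2 : r ^ 2 = ‖SN‖ := Real.sq_sqrt (norm_nonneg _)
          set cc : ℝ := r⁻¹ with hccdef
          have hccpos : 0 < cc := inv_pos.mpr hrpos
          set x : ℕ → A := fun i => if i < N then cc • f i else 0 with hxdef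
          have hmem : MemHA x := memHA_of_finite (Finset.range N)
            fun i hi => if_neg (by simpa using hi)
          have hxx : (fun i => star (x i) * x i) =
              fun i => if i < N then (cc ^ 2) • (star (f i) * f i) else 0 := by
            funext i
            by_cases h : i < N
            · simp only [hxdef, if_pos h, star_smul, star_trivial, smul_mul_assoc,
                mul_smul_comm, smul_smul, sq]
            · simp [hxdef, if_neg h]
          have htsum : ∑' i, star (x i) * x i = (cc ^ 2) • SN := by
            rw [hxx, tsum_eq_sum (s := Finset.range N)
              (fun i hi => if_neg (by simpa using hi))]
            rw [Finset.sum_congr rfl (fun i hi => if_pos (Finset.mem_range.mp hi)),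
              ← Finset.smul_sum]
          have hHA : HAnorm x = 1 := by
            rw [HAnorm, htsum, norm_smul, Real.norm_eq_abs, abs_of_pos (by positivity)]
            have : cc ^ 2 * ‖SN‖ = 1 := by
              rw [← hr2, hccdef]
              field_simp
            rw [this, Real.sqrt_one]
          have hφx : φ x = cc • SN := by
            have he : (fun i => star (f i) * x i) =
                fun i => if i < N then cc • (star (f i) * f i) else 0 := by
              funext i
              by_cases h : i < N
              · simp [hxdef, if_pos h, mul_smul_comm]
              · simp [hxdef, if_neg h]
            rw [hφdef]
            simp only
            rw [he, tsum_eq_sum (s := Finset.range N)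
              (fun i hi => if_neg (by simpa using hi))]
            rw [Finset.sum_congr rfl (fun i hi => if_pos (Finset.mem_range.mp hi)),
              ← Finset.smul_sum]
          have hnorm : ‖φ x‖ = r := by
            rw [hφx, norm_smul, Real.norm_eq_abs, abs_of_pos hccpos, hccdef, ← hr2,
              sq, ← mul_assoc, inv_mul_cancel₀ hrpos.ne', one_mul]
          have hrS : r ∈ Sset := ⟨x, hmem, le_of_eq hHA, hnorm.symm⟩
          have : r ≤ sSup Sset := le_csSup hSbdd hrS
          calc ‖SN‖ = r ^ 2 := hr2.symm
            _ ≤ (sSup Sset) ^ 2 := pow_le_pow_left₀ hrpos.le this 2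
  · -- converse direction
    rintro φ ⟨hadd, hsmul, C, hbound⟩
    set f : ℕ → A := fun i => star (φ (Pi.single i 1)) with hfdef
    have hsf : ∀ i, star (f i) = φ (Pi.single i 1) := fun i => star_star _
    have hkey : ∀ (x : ℕ → A) (N : ℕ),
        φ (trunc x N) = ∑ i ∈ Finset.range N, star (f i) * x i := by
      intro x N
      rw [phi_trunc hadd hsmul x N]
      exact Finset.sum_congr rfl fun i _ => by rw [hsf]
    -- the partial sums identity for f itself
    have hSN : ∀ N, φ (trunc f N) = ∑ i ∈ Finset.range N, star (f i) * f i := fun N => hkey f N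
    have htrunc_tsum : ∀ N, ∑' i, star (trunc f N i) * trunc f N i
        = ∑ i ∈ Finset.range N, star (f i) * f i := by
      intro N
      have he : (fun i => star (trunc f N i) * trunc f N i) =
          fun i => if i < N then star (f i) * f i else 0 := by
        funext i
        by_cases h : i < N <;> simp [trunc, h]
      rw [he, tsum_eq_sum (s := Finset.range N) (fun i hi => if_neg (by simpa using hi))]
      exact Finset.sum_congr rfl fun i hi => if_pos (Finset.mem_range.mp hi)
    have hCb : ∀ N, ‖∑ i ∈ Finset.range N, star (f i) * f i‖ ≤ (max C 0) ^ 2 := by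
      intro N
      have hr2 : (Real.sqrt ‖∑ i ∈ Finset.range N, star (f i) * f i‖) ^ 2
          = ‖∑ i ∈ Finset.range N, star (f i) * f i‖ := Real.sq_sqrt (norm_nonneg _)
      have hb : ‖∑ i ∈ Finset.range N, star (f i) * f i‖
          ≤ C * Real.sqrt ‖∑ i ∈ Finset.range N, star (f i) * f i‖ := by
        conv_lhs => rw [← hSN N]
        calc ‖φ (trunc f N)‖ ≤ C * HAnorm (trunc f N) := hbound _ (memHA_trunc f N)
          _ = _ := by rw [HAnorm, htrunc_tsum N]
      rcases eq_or_lt_of_le (Real.sqrt_nonneg ‖∑ i ∈ Finset.range N, star (f i) * f i‖)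
        with h0 | hrpos
      · have hz : ‖∑ i ∈ Finset.range N, star (f i) * f i‖ = 0 := by
          rw [← hr2, ← h0]
          norm_num
        rw [hz]
        positivity
      · have h1 : Real.sqrt ‖∑ i ∈ Finset.range N, star (f i) * f i‖
            * Real.sqrt ‖∑ i ∈ Finset.range N, star (f i) * f i‖
            ≤ C * Real.sqrt ‖∑ i ∈ Finset.range N, star (f i) * f i‖ := by
          rw [Real.mul_self_sqrt (norm_nonneg _)]
          exact hb
        have h2 : Real.sqrt ‖∑ i ∈ Finset.range N, star (f i) * f i‖ ≤ C :=
          le_of_mul_le_mul_right h1 hrpos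
        calc ‖∑ i ∈ Finset.range N, star (f i) * f i‖ = _ := hr2.symm
          _ ≤ (max C 0) ^ 2 := pow_le_pow_left₀ hrpos.le (h2.trans (le_max_left C 0)) 2
    refine ⟨f, ⟨(max C 0) ^ 2, hCb⟩, ?_⟩
    intro x hx
    have hsum : Summable fun i => star (f i) * x i := summable_inner hCb hx
    -- partial sums tend to φ x
    have htail0 : Filter.Tendsto (fun N => HAnorm (tailseq x N)) Filter.atTop (nhds 0) := by
      have hkey2 : ∀ N, ∑' i, star (tailseq x N i) * tailseq x N i
          = (∑' i, star (x i) * x i) - ∑ i ∈ Finset.range N, star (x i) * x i := by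
        intro N
        have he : (fun i => star (tailseq x N i) * tailseq x N i) =
            fun i => star (x i) * x i - (if i < N then star (x i) * x i else 0) := by
          funext i
          by_cases h : i < N <;> simp [tailseq, h]
        have hfin : Summable (fun i => if i < N then star (x i) * x i else 0) :=
          summable_of_ne_finset_zero (s := Finset.range N) fun i hi => if_neg (by simpa using hi)
        rw [he, Summable.tsum_sub hx hfin, tsum_eq_sum (s := Finset.range N)
          (fun i hi => if_neg (by simpa using hi))]
        congr 1
        exact Finset.sum_congr rfl fun i hi => if_pos (Finset.mem_range.mp hi)
      have h1 : Filter.Tendsto (fun N => (∑' i, star (x i) * x i)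
          - ∑ i ∈ Finset.range N, star (x i) * x i) Filter.atTop (nhds 0) := by
        have := (hx.hasSum.tendsto_sum_nat).const_sub (∑' i, star (x i) * x i)
        simpa using this
      have h2 : Filter.Tendsto (fun N => ‖∑' i, star (tailseq x N i) * tailseq x N i‖)
          Filter.atTop (nhds 0) := by
        simp only [hkey2]
        simpa using h1.norm
      have h3 := h2.sqrt
      rw [Real.sqrt_zero] at h3
      exact h3
    have hφtail : Filter.Tendsto (fun N => φ (tailseq x N)) Filter.atTop (nhds 0) := by
      refine squeeze_zero_norm (a := fun N => C * HAnorm (tailseq x N))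
        (fun N => hbound _ (memHA_tailseq hx N)) ?_
      simpa using (htail0.const_mul C)
    have hsplit : ∀ N, ∑ i ∈ Finset.range N, star (f i) * x i = φ x - φ (tailseq x N) := by
      intro N
      have h := hadd (trunc x N) (tailseq x N) (memHA_trunc x N) (memHA_tailseq hx N)
      rw [trunc_add_tailseq] at h
      rw [← hkey x N]
      exact eq_sub_of_add_eq h.symm
    have h2 : Filter.Tendsto (fun N => ∑ i ∈ Finset.range N, star (f i) * x i)
        Filter.atTop (nhds (φ x)) := by
      simp only [hsplit]
      simpa using hφtail.const_sub (φ x)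
    have h1 := hsum.hasSum.tendsto_sum_nat
    have : ∑' i, star (f i) * x i = φ x := tendsto_nhds_unique h1 h2
    rw [← this]
    exact hsum.hasSum
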